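/- Let λ₁, λ₂, λ₃ > 0, θ > 0, c₁, c₂, c₃ > 0, u* ∈ ℝ, and write φᵢ = φ_{λᵢ} where φ_λ(x) = λ(e^x − 1). Let η₁, η₂, η₃ : [0,∞) → ℝ be differentiable, let φ̂₁, φ̂₂, φ̂₃ : [0,∞) → ℝ be arbitrary functions, and set z₁ = η₃ − η₂, z₂ = η₁ − z₁. Assume φ₁(z₂(t)) ≠ 0 for all t and that the perturbed closed-loop system η₁′ = u* − u − φ̂₂, η₂′ = −φ̂₃, η₃′ = −φ̂₁ holds, where u = u* + (1/φ₁(z₂))·(c₃·φ₁(z₂)² + θc₁·φ₂(η₂)² + θc₂·φ₃(z₁)²) + ((φ₁(z₂) − θφ₃(z₁))/φ₁(z₂))·φ₁(η₁) − φ₂(η₂) + ((θφ₃(z₁) − φ₁(z₂) − θφ₂(η₂))/φ₁(z₂))·φ₃(η₃). Then, with V₃(η₂, z₁, z₂) = θλ₂ω̃(η₂) + θλ₃ω̃(z₁) + λ₁ω̃(z₂), ω̃(x) = e^x − 1 − x, one has d/dt V₃ = −θc₁·φ₂(η₂)² − θc₂·φ₃(z₁)² − c₃·φ₁(z₂)²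 + A₁·(φ̂₁ − φ₁(η₁)) + A₂·(φ̂₂ − φ₂(η₂)) + A₃·(φ̂₃ − φ₃(η₃)), where A₁ = φ₁(z₂) − θφ₃(z₁), A₂ = −φ₁(z₂), A₃ = θφ₃(z₁) − φ₁(z₂) − θφ₂(η₂). -/

import Mathlib

/-- `φ_λ(x) = λ(e^x − 1)`. -/
noncomputable def phiL (l x : ℝ) : ℝ := l * (Real.exp x - 1)

/-- `ω̃(x) = e^x − 1 − x`. -/
noncomputable def omegaTilde (x : ℝ) : ℝ := Real.exp x - 1 - x

/-- Lyapunov derivative identity (equation (aa3.81)) of Theorem 3.4: for the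
three-species closed loop with perturbed interaction terms `φ̂ᵢ`,
`d/dt V₃ = −θc₁φ₂(η₂)² − θc₂φ₃(z₁)² − c₃φ₁(z₂)²
  + A₁(φ̂₁ − φ₁(η₁)) + A₂(φ̂₂ − φ₂(η₂)) + A₃(φ̂₃ − φ₃(η₃))`. -/
theorem stmt3 (l1 l2 l3 θ c1 c2 c3 ustar : ℝ)
    (hl1 : 0 < l1) (hl2 : 0 < l2) (hl3 : 0 < l3) (hθ : 0 < θ)
    (hc1 : 0 < c1) (hc2 : 0 < c2) (hc3 : 0 < c3)
    (η1 η2 η3 z1 z2 u : ℝ → ℝ)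
    (phat1 phat2 phat3 : ℝ → ℝ)
    (hz1 : ∀ t, z1 t = η3 t - η2 t)
    (hz2 : ∀ t, z2 t = η1 t - z1 t)
    (hne : ∀ t, 0 ≤ t → phiL l1 (z2 t) ≠ 0)
    (hu : ∀ t, u t = ustar
      + (1 / phiL l1 (z2 t)) *
          (c3 * (phiL l1 (z2 t))^2 + θ * c1 * (phiL l2 (η2 t))^2
            + θ * c2 * (phiL l3 (z1 t))^2)
      + ((phiL l1 (z2 t) - θ * phiL l3 (z1 t)) / phiL l1 (z2 t)) * phiL l1 (η1 t)
      - phiL l2 (η2 t)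
      + ((θ * phiL l3 (z1 t) - phiL l1 (z2 t) - θ * phiL l2 (η2 t)) / phiL l1 (z2 t))
          * phiL l3 (η3 t))
    (hd1 : ∀ t, 0 ≤ t →
      HasDerivWithinAt η1 (ustar - u t - phat2 t) (Set.Ici 0) t)
    (hd2 : ∀ t, 0 ≤ t →
      HasDerivWithinAt η2 (-(phat3 t)) (Set.Ici 0) t)
    (hd3 : ∀ t, 0 ≤ t →
      HasDerivWithinAt η3 (-(phat1 t)) (Set.Ici 0) t) :
    ∀ t, 0 ≤ t → HasDerivWithinAt
      (fun s => θ * l2 * omegaTilde (η2 s) + θ * l3 * omegaTilde (z1 s)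
        + l1 * omegaTilde (z2 s))
      (-(θ * c1 * (phiL l2 (η2 t))^2) - θ * c2 * (phiL l3 (z1 t))^2
        - c3 * (phiL l1 (z2 t))^2
        + (phiL l1 (z2 t) - θ * phiL l3 (z1 t)) * (phat1 t - phiL l1 (η1 t))
        + (-(phiL l1 (z2 t))) * (phat2 t - phiL l2 (η2 t))
        + (θ * phiL l3 (z1 t) - phiL l1 (z2 t) - θ * phiL l2 (η2 t))
            * (phat3 t - phiL l3 (η3 t)))
      (Set.Ici 0) t := by

  intro t ht
  have h1 := hd1 t ht
  have h2 := hd2 t ht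
  have h3 := hd3 t ht
  have hom : ∀ x : ℝ, HasDerivAt omegaTilde (Real.exp x - 1) x := fun x => by
    show HasDerivAt (fun x => Real.exp x - 1 - x) (Real.exp x - 1) x
    exact ((Real.hasDerivAt_exp x).sub_const 1).sub (hasDerivAt_id' x)
  have hz1d : HasDerivWithinAt (fun s => η3 s - η2 s)
      (-(phat1 t) - -(phat3 t)) (Set.Ici 0) t := h3.sub h2
  have hz2d : HasDerivWithinAt (fun s => η1 s - (η3 s - η2 s))
      ((ustar - u t - phat2 t) - (-(phat1 t) - -(phat3 t))) (Set.Ici 0) t := h1.sub hz1d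
  have A : HasDerivWithinAt (fun s => θ * l2 * omegaTilde (η2 s))
      (θ * l2 * ((Real.exp (η2 t) - 1) * (-(phat3 t)))) (Set.Ici 0) t :=
    (((hom (η2 t)).comp_hasDerivWithinAt t h2)).const_mul _
  have B : HasDerivWithinAt (fun s => θ * l3 * omegaTilde (η3 s - η2 s))
      (θ * l3 * ((Real.exp (η3 t - η2 t) - 1) * (-(phat1 t) - -(phat3 t)))) (Set.Ici 0) t :=
    (((hom (η3 t - η2 t)).comp_hasDerivWithinAt t hz1d)).const_mul _
  have C : HasDerivWithinAt (fun s => l1 * omegaTilde (η1 s - (η3 s - η2 s)))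
      (l1 * ((Real.exp (η1 t - (η3 t - η2 t)) - 1) *
        ((ustar - u t - phat2 t) - (-(phat1 t) - -(phat3 t))))) (Set.Ici 0) t :=
    (((hom (η1 t - (η3 t - η2 t))).comp_hasDerivWithinAt t hz2d)).const_mul _
  have hfun : (fun s => θ * l2 * omegaTilde (η2 s) + θ * l3 * omegaTilde (z1 s)
      + l1 * omegaTilde (z2 s)) = (fun s => θ * l2 * omegaTilde (η2 s)
      + θ * l3 * omegaTilde (η3 s - η2 s) + l1 * omegaTilde (η1 s - (η3 s - η2 s))) := by
    funext s; rw [hz2 s, hz1 s]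
  rw [hfun]
  refine HasDerivWithinAt.congr_deriv ((A.add B).add C) ?_
  have hne' := hne t ht
  rw [hz2 t, hz1 t] at hne' ⊢
  rw [hu t, hz2 t, hz1 t]
  simp only [phiL] at hne' ⊢
  have hl1ne : l1 ≠ 0 := ne_of_gt hl1
  have hex : Real.exp (η1 t - (η3 t - η2 t)) - 1 ≠ 0 := by
    intro h; exact hne' (by rw [h]; ring)
  field_simp
  ring
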